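/- For a uniformly random permutation π of a finite set Ω and nonempty subsets S₁, S₂ ⊆ Ω, the probability that min(π(S₁)) = min(π(S₂)) equals |S₁ ∩ S₂| / |S₁ ∪ S₂| (the Jaccard similarity). -/

import Mathlib

open Finset

/-- For a uniformly random permutation `π` of a finite linearly ordered set `Ω` and
nonempty subsets `S₁ S₂ ⊆ Ω`, the probability that `min (π '' S₁) = min (π '' S₂)`
equals the Jaccard similarity `|S₁ ∩ S₂| / |S₁ ∪ S₂|`. -/
theorem minhash_collision_prob {Ω : Type*} [Fintype Ω] [LinearOrder Ω] [DecidableEq Ω]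
    (S₁ S₂ : Finset Ω) (h₁ : S₁.Nonempty) (h₂ : S₂.Nonempty) :
    (Nat.card {π : Equiv.Perm Ω //
        (S₁.image π).min' (h₁.image π) = (S₂.image π).min' (h₂.image π)} : ℝ) /
      (Nat.card (Equiv.Perm Ω) : ℝ)
    = ((S₁ ∩ S₂).card : ℝ) / ((S₁ ∪ S₂).card : ℝ) := by
  classical
  set U : Finset Ω := S₁ ∪ S₂ with hUdef
  have hU : U.Nonempty := h₁.mono Finset.subset_union_left
  -- the minimum value of π over U
  set m : Equiv.Perm Ω → Ω := fun π => (U.image π).min' (hU.image π) with hm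
  -- the argmin of π over U
  set a : Equiv.Perm Ω → Ω := fun π => π.symm (m π) with ha
  have hπa : ∀ π : Equiv.Perm Ω, π (a π) = m π := fun π => Equiv.apply_symm_apply π (m π)
  have hmemU : ∀ π : Equiv.Perm Ω, a π ∈ U := by
    intro π
    have h' : m π ∈ U.image π := Finset.min'_mem _ _
    obtain ⟨x, hx, hxe⟩ := Finset.mem_image.1 h'
    have hmx : m π = π x := hxe.symm
    have : a π = x := by rw [ha]; simp only [hmx]; exact π.symm_apply_apply x
    rwa [this]
  -- the minimum over U is the min of the minima over S₁, S₂, inside each image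
  have hmle : ∀ (π : Equiv.Perm Ω) (S : Finset Ω) (hS : S.Nonempty), S ⊆ U →
      m π ≤ (S.image π).min' (hS.image π) := by
    intro π S hS hsub
    exact Finset.min'_le _ _ (Finset.image_subset_image hsub (Finset.min'_mem _ _))
  have key : ∀ π : Equiv.Perm Ω,
      ((S₁.image π).min' (h₁.image π) = (S₂.image π).min' (h₂.image π)) ↔ a π ∈ S₁ ∩ S₂ := by
    intro π
    constructor
    · intro h
      -- m π ∈ image of S₁ or S₂, and in either case m π equals both minima
      have himU : U.image π = S₁.image π ∪ S₂.image π := by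
        rw [hUdef, Finset.image_union]
      have hmU : m π ∈ (S₁.image π) ∪ (S₂.image π) := by
        have h' : m π ∈ U.image π := Finset.min'_mem _ _
        rwa [himU] at h'
      have h1le : (S₁.image π).min' (h₁.image π) ≤ m π := by
        rcases Finset.mem_union.1 hmU with hh | hh
        · exact Finset.min'_le _ _ hh
        · rw [h]; exact Finset.min'_le _ _ hh
      have h1 : m π = (S₁.image π).min' (h₁.image π) :=
        le_antisymm (hmle π S₁ h₁ Finset.subset_union_left) h1le
      have h2 : m π = (S₂.image π).min' (h₂.image π) := by rw [h1, h]
      obtain ⟨x, hx, hxe⟩ := Finset.mem_image.1 (h1 ▸ Finset.min'_mem (S₁.image π) (h₁.image π))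
      obtain ⟨y, hy, hye⟩ := Finset.mem_image.1 (h2 ▸ Finset.min'_mem (S₂.image π) (h₂.image π))
      have hmx : m π = π x := hxe.symm
      have hmy : m π = π y := hye.symm
      have hax : a π = x := by rw [ha]; simp only [hmx]; exact π.symm_apply_apply x
      have hay : a π = y := by rw [ha]; simp only [hmy]; exact π.symm_apply_apply y
      exact Finset.mem_inter.2 ⟨hax ▸ hx, hay ▸ hy⟩
    · intro h
      obtain ⟨ha1, ha2⟩ := Finset.mem_inter.1 h
      have e1 : (S₁.image π).min' (h₁.image π) = m π :=
        le_antisymm (Finset.min'_le _ _ (hπa π ▸ Finset.mem_image_of_mem π ha1))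
          (hmle π S₁ h₁ Finset.subset_union_left)
      have e2 : (S₂.image π).min' (h₂.image π) = m π :=
        le_antisymm (Finset.min'_le _ _ (hπa π ▸ Finset.mem_image_of_mem π ha2))
          (hmle π S₂ h₂ Finset.subset_union_right)
      rw [e1, e2]
  -- all fibers of `a` over elements of U have the same cardinality
  have hswapU : ∀ x ∈ U, ∀ y ∈ U, U.image (Equiv.swap x y) = U := by
    intro x hx y hy
    have hsub : ∀ z ∈ U, Equiv.swap x y z ∈ U := by
      intro z hz
      rcases eq_or_ne z x with rfl | hzx
      · rwa [Equiv.swap_apply_left]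
      rcases eq_or_ne z y with rfl | hzy
      · rwa [Equiv.swap_apply_right]
      · rwa [Equiv.swap_apply_of_ne_of_ne hzx hzy]
    apply Finset.Subset.antisymm
    · intro z hz
      obtain ⟨w, hw, rfl⟩ := Finset.mem_image.1 hz
      exact hsub w hw
    · intro z hz
      refine Finset.mem_image.2 ⟨Equiv.swap x y z, hsub z hz, ?_⟩
      exact Equiv.swap_apply_self x y z
  have haswap : ∀ x ∈ U, ∀ y ∈ U, ∀ π : Equiv.Perm Ω,
      a ((Equiv.swap x y).trans π) = Equiv.swap x y (a π) := by
    intro x hx y hy π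
    have him : U.image ((Equiv.swap x y).trans π) = U.image π := by
      have : U.image ((Equiv.swap x y).trans π) = (U.image (Equiv.swap x y)).image π := by
        rw [Finset.image_image]; rfl
      rw [this, hswapU x hx y hy]
    have hmeq : m ((Equiv.swap x y).trans π) = m π := by
      rw [hm]; simp only [him]
    rw [ha]; simp only [hmeq, Equiv.symm_trans_apply, Equiv.symm_swap]
  have hfiber : ∀ x ∈ U, ∀ y ∈ U,
      (Finset.univ.filter (fun π : Equiv.Perm Ω => a π = x)).card
        = (Finset.univ.filter (fun π : Equiv.Perm Ω => a π = y)).card := by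
    intro x hx y hy
    apply Finset.card_bij' (fun π _ => (Equiv.swap x y).trans π)
      (fun π _ => (Equiv.swap x y).trans π)
    · intro π hπ
      have := (Finset.mem_filter.1 hπ).2
      refine Finset.mem_filter.2 ⟨Finset.mem_univ _, ?_⟩
      rw [haswap x hx y hy, this, Equiv.swap_apply_left]
    · intro π hπ
      have := (Finset.mem_filter.1 hπ).2
      refine Finset.mem_filter.2 ⟨Finset.mem_univ _, ?_⟩
      rw [haswap x hx y hy, this, Equiv.swap_apply_right]
    · intro π _
      ext z
      simp [Equiv.swap_apply_self]
    · intro π _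
      ext z
      simp [Equiv.swap_apply_self]
  -- counting: fibers partition
  have hsum : ∀ T : Finset Ω, T ⊆ U →
      (Finset.univ.filter (fun π : Equiv.Perm Ω => a π ∈ T)).card
        = ∑ x ∈ T, (Finset.univ.filter (fun π : Equiv.Perm Ω => a π = x)).card := by
    intro T hT
    rw [Finset.card_eq_sum_card_fiberwise
      (f := a) (s := Finset.univ.filter (fun π : Equiv.Perm Ω => a π ∈ T)) (t := T) (fun π hπ => (Finset.mem_filter.1 hπ).2)]
    refine Finset.sum_congr rfl fun x hx => ?_
    congr 1
    rw [Finset.filter_filter]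
    refine Finset.filter_congr fun π _ => ?_
    constructor
    · exact fun h => h.2
    · exact fun h => ⟨h ▸ hx, h⟩
  set c : ℕ := (Finset.univ.filter (fun π : Equiv.Perm Ω => a π = U.min' hU)).card with hc
  have hconst : ∀ x ∈ U,
      (Finset.univ.filter (fun π : Equiv.Perm Ω => a π = x)).card = c :=
    fun x hx => hfiber x hx (U.min' hU) (Finset.min'_mem U hU)
  have hcpos : 0 < c := by
    rw [hc]
    refine Finset.card_pos.2 ⟨Equiv.refl Ω, Finset.mem_filter.2 ⟨Finset.mem_univ _, ?_⟩⟩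
    rw [ha, hm]
    simp [Finset.image_id]
  -- numerator
  have hnum : Nat.card {π : Equiv.Perm Ω //
      (S₁.image π).min' (h₁.image π) = (S₂.image π).min' (h₂.image π)}
      = (S₁ ∩ S₂).card * c := by
    rw [Nat.card_eq_fintype_card, Fintype.card_subtype]
    have : (Finset.univ.filter (fun π : Equiv.Perm Ω =>
        (S₁.image π).min' (h₁.image π) = (S₂.image π).min' (h₂.image π)))
        = (Finset.univ.filter (fun π : Equiv.Perm Ω => a π ∈ S₁ ∩ S₂)) :=
      Finset.filter_congr fun π _ => key π
    rw [this, hsum (S₁ ∩ S₂) (Finset.inter_subset_union)]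
    rw [Finset.sum_congr rfl (fun x hx => hconst x (Finset.inter_subset_union hx)),
      Finset.sum_const, smul_eq_mul]
  -- denominator
  have hden : Nat.card (Equiv.Perm Ω) = U.card * c := by
    rw [Nat.card_eq_fintype_card]
    have : Fintype.card (Equiv.Perm Ω)
        = (Finset.univ.filter (fun π : Equiv.Perm Ω => a π ∈ U)).card := by
      rw [Finset.filter_true_of_mem (fun π _ => hmemU π), Finset.card_univ]
    rw [this, hsum U (le_refl U),
      Finset.sum_congr rfl (fun x hx => hconst x hx), Finset.sum_const, smul_eq_mul]
  rw [hnum, hden]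
  have hc0 : (c : ℝ) ≠ 0 := Nat.cast_ne_zero.2 hcpos.ne'
  push_cast
  rw [mul_div_mul_right _ _ hc0]
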